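/- Let G=(V,E) with U⊆V and capacity function c, and let G' be the auxiliary graph as defined. For any matching M in G', there exists a capacitated dominating set S⊆V containing U with a dominating function f satisfying |f⁻¹(v)|≤1 for all v∈V∖U, such that |S| = |V| − |M|. -/

import Mathlib

open Finset

/-- The vertex set of the auxiliary graph `G'`: one vertex for each `v ∉ U`,
and `c u` copies of each `u ∈ U`. -/
def AuxVert {V : Type*} [DecidableEq V] (U : Finset V) (c : V → ℕ) : Type _ :=
  {v : V // v ∉ U} ⊕ (Σ u : {u : V // u ∈ U}, Fin (c u.1))

/-- The auxiliary graph `G'`: copies of `u ∈ U` are joined to `v ∉ U` iff `uv ∈ E`;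
for `v, w ∉ U`, `vw ∈ E'` iff `vw ∈ E` and `c v + c w > 0`; no edges between
copies of vertices of `U`. -/
def auxGraph {V : Type*} [DecidableEq V] (G : SimpleGraph V) (U : Finset V) (c : V → ℕ) :
    SimpleGraph (AuxVert U c) where
  Adj x y :=
    match x, y with
    | Sum.inl v, Sum.inl w => G.Adj v.1 w.1 ∧ 0 < c v.1 + c w.1
    | Sum.inl v, Sum.inr ⟨u, _⟩ => G.Adj u.1 v.1
    | Sum.inr ⟨u, _⟩, Sum.inl v => G.Adj u.1 v.1
    | Sum.inr _, Sum.inr _ => False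
  symm := by
    constructor
    rintro (v | ⟨u, i⟩) (w | ⟨u', j⟩) h
    · exact ⟨h.1.symm, by omega⟩
    · exact h
    · exact h
    · exact h
  loopless := by
    constructor
    rintro (v | ⟨u, i⟩) h
    · exact G.loopless.irrefl v.1 h.1
    · exact h

namespace CapAux

instance {V : Type*} [Fintype V] [DecidableEq V] (U : Finset V) (c : V → ℕ) :
    Fintype (AuxVert U c) :=
  inferInstanceAs (Fintype ({v : V // v ∉ U} ⊕ (Σ u : {u : V // u ∈ U}, Fin (c u.1))))

variable {V : Type*} [DecidableEq V] {G : SimpleGraph V} {U : Finset V} {c : V → ℕ}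
variable {M : SimpleGraph.Subgraph (auxGraph G U c)}

open Classical

/-- The partner function of a matching: `pt hM x` is the matching partner of `x`
(or `x` itself if `x` is unmatched). -/
noncomputable def pt (hM : M.IsMatching) (x : AuxVert U c) : AuxVert U c :=
  if h : x ∈ M.verts then (hM h).exists.choose else x

lemma pt_adj (hM : M.IsMatching) {x : AuxVert U c} (hx : x ∈ M.verts) :
    M.Adj x (pt hM x) := by
  rw [pt, dif_pos hx]; exact (hM hx).exists.choose_spec

lemma pt_eq (hM : M.IsMatching) {x y : AuxVert U c} (h : M.Adj x y) : pt hM x = y := by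
  have hx : x ∈ M.verts := M.edge_vert h
  rw [pt, dif_pos hx]
  exact (hM hx).unique (hM hx).exists.choose_spec h

/-- The underlying `G`-vertex of a vertex of the auxiliary graph. -/
def base : AuxVert U c → V
  | Sum.inl v => v.1
  | Sum.inr u => u.1.1

/-- Tie-breaking predicate: `v` loses against `w` (so `v` gets dominated by `w`). -/
def loses (c : V → ℕ) (r : V → ℕ) (v w : V) : Prop :=
  c w ≠ 0 ∧ (c v = 0 ∨ r w < r v)

lemma loses_iff {r : V → ℕ} {v w : V} (hr : r v ≠ r w) (hc : 0 < c v + c w) :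
    loses c r v w ↔ ¬ loses c r w v := by
  unfold loses; omega

/-- `v` is "dead": it is matched and loses to its partner, hence gets dominated. -/
def dead (hM : M.IsMatching) (r : V → ℕ) (v : V) : Prop :=
  ∃ h : v ∉ U, Sum.inl ⟨v, h⟩ ∈ M.verts ∧
    ∀ w : {x : V // x ∉ U}, pt hM (Sum.inl ⟨v, h⟩) = Sum.inl w → loses c r v w.1

end CapAux

/-- For any matching `M` in the auxiliary graph `G'`, there is a capacitated
dominating set `S ⊇ U` of `G` with dominating function `f` such that every
`v ∉ U` dominates at most one vertex, and `|S| = |V| - |M|`. -/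
theorem stmt_2 {V : Type*} [Fintype V] [DecidableEq V]
    (G : SimpleGraph V) [DecidableRel G.Adj]
    (U : Finset V) (c : V → ℕ)
    (M : SimpleGraph.Subgraph (auxGraph G U c)) (hM : M.IsMatching) :
    ∃ (S : Finset V) (f : V → V),
      U ⊆ S ∧
      (∀ v, v ∉ S → f v ∈ S ∧ G.Adj v (f v)) ∧
      (∀ w ∈ S, (Finset.univ.filter (fun v => v ∉ S ∧ f v = w)).card ≤ c w) ∧
      (∀ w, w ∉ U → (Finset.univ.filter (fun v => v ∉ S ∧ f v = w)).card ≤ 1) ∧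
      Fintype.card V = M.edgeSet.ncard + S.card := by
  classical
  set r : V → ℕ := fun v => (Fintype.equivFin V v : ℕ) with hr
  have hrinj : ∀ {a b : V}, r a = r b → a = b := by
    intro a b h
    exact (Fintype.equivFin V).injective (Fin.val_injective h)
  set S : Finset V := univ.filter (fun v => ¬ CapAux.dead hM r v) with hS
  set f : V → V := fun v =>
    if h : v ∉ U then CapAux.base (CapAux.pt hM (Sum.inl ⟨v, h⟩)) else v with hf
  have hmemS : ∀ v, v ∈ S ↔ ¬ CapAux.dead hM r v := by
    intro v; simp [hS]
  have hUS : U ⊆ S := by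
    intro v hv
    rw [hmemS]
    rintro ⟨h, -⟩
    exact h hv
  -- main analysis of a dead vertex
  have key : ∀ v, CapAux.dead hM r v → ∀ h : v ∉ U, f v ∈ S ∧ G.Adj v (f v) := by
    rintro v ⟨h0, hm, hl⟩ h
    have hadj : M.Adj (Sum.inl ⟨v, h⟩) (CapAux.pt hM (Sum.inl ⟨v, h⟩)) :=
      CapAux.pt_adj hM hm
    have hfv : f v = CapAux.base (CapAux.pt hM (Sum.inl ⟨v, h⟩)) := by
      rw [hf]; exact dif_pos h
    have haux : (auxGraph G U c).Adj (Sum.inl ⟨v, h⟩) (CapAux.pt hM (Sum.inl ⟨v, h⟩)) :=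
      M.adj_sub hadj
    rcases hx : CapAux.pt hM (Sum.inl ⟨v, h⟩) with w | ⟨u, i⟩
    · -- partner is a vertex outside U
      rw [hx] at haux hadj
      have hGadj : G.Adj v w.1 ∧ 0 < c v + c w.1 := haux
      have hlvw : CapAux.loses c r v w.1 := hl w hx
      refine ⟨?_, ?_⟩
      · rw [hfv, hx]
        rw [hmemS]
        rintro ⟨h', hm', hl'⟩
        have hpw : CapAux.pt hM (Sum.inl (⟨w.1, h'⟩ : {x : V // x ∉ U})) =
            Sum.inl ⟨v, h⟩ := CapAux.pt_eq hM hadj.symm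
        have hlwv : CapAux.loses c r w.1 v := hl' ⟨v, h⟩ hpw
        have hne : r v ≠ r w.1 := fun hrr => G.ne_of_adj hGadj.1 (hrinj hrr)
        exact ((CapAux.loses_iff hne hGadj.2).mp hlvw) hlwv
      · rw [hfv, hx]
        exact hGadj.1
    · -- partner is a copy of a vertex of U
      rw [hx] at haux hadj
      have hGadj : G.Adj u.1 v := haux
      exact ⟨by rw [hfv, hx]; exact hUS u.2, by rw [hfv, hx]; exact hGadj.symm⟩
  have hdom : ∀ v, v ∉ S → f v ∈ S ∧ G.Adj v (f v) := by
    intro v hv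
    rw [hmemS, not_not] at hv
    exact key v hv hv.choose
  -- characterization of the preimage of `w ∉ U`
  have hcharOut : ∀ w (hw : w ∉ U), ∀ v, v ∉ S → f v = w →
      ∃ hvU : v ∉ U, CapAux.pt hM (Sum.inl (⟨w, hw⟩ : {x : V // x ∉ U})) =
        Sum.inl ⟨v, hvU⟩ ∧ c w ≠ 0 := by
    intro w hw v hv hfveq
    rw [hmemS, not_not] at hv
    obtain ⟨h0, hm, hl⟩ := hv
    have hadj : M.Adj (Sum.inl ⟨v, h0⟩) (CapAux.pt hM (Sum.inl ⟨v, h0⟩)) :=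
      CapAux.pt_adj hM hm
    have hfv : f v = CapAux.base (CapAux.pt hM (Sum.inl ⟨v, h0⟩)) := by
      rw [hf]; exact dif_pos h0
    rcases hx : CapAux.pt hM (Sum.inl ⟨v, h0⟩) with w' | ⟨u, i⟩
    · rw [hx] at hadj
      have hww' : w'.1 = w := by rw [hfv, hx] at hfveq; exact hfveq
      have hw'eq : w' = (⟨w, hw⟩ : {x : V // x ∉ U}) := Subtype.ext hww'
      refine ⟨h0, ?_, ?_⟩
      · rw [← hw'eq]
        exact CapAux.pt_eq hM hadj.symm
      · have := hl w' hx
        rw [hww'] at this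
        exact this.1
    · exfalso
      rw [hfv, hx] at hfveq
      have huw : u.1 = w := hfveq
      exact hw (huw ▸ u.2)
  -- fourth condition, and strengthening for the third
  have hpre : ∀ w, w ∉ U →
      (univ.filter (fun v => v ∉ S ∧ f v = w)).card ≤ 1 ∧
      ((univ.filter (fun v => v ∉ S ∧ f v = w)).Nonempty → c w ≠ 0) := by
    intro w hw
    constructor
    · rw [Finset.card_le_one]
      intro a ha b hb
      simp only [mem_filter, mem_univ, true_and] at ha hb
      obtain ⟨ha1, ha2, -⟩ := hcharOut w hw a ha.1 ha.2
      obtain ⟨hb1, hb2, -⟩ := hcharOut w hw b hb.1 hb.2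
      have := ha2.symm.trans hb2
      exact congrArg CapAux.base this
    · rintro ⟨v, hv⟩
      simp only [mem_filter, mem_univ, true_and] at hv
      obtain ⟨-, -, hc⟩ := hcharOut w hw v hv.1 hv.2
      exact hc
  -- third condition
  have hcap : ∀ w ∈ S, (univ.filter (fun v => v ∉ S ∧ f v = w)).card ≤ c w := by
    intro w hwS
    by_cases hwU : w ∈ U
    · -- injection into the copies of w
      set idx : V → ℕ := fun v =>
        if h : v ∉ U then
          Sum.elim (fun _ => 0) (fun p => (p.2 : ℕ)) (CapAux.pt hM (Sum.inl ⟨v, h⟩))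
        else 0 with hidx
      have hT : ∀ v ∈ univ.filter (fun v => v ∉ S ∧ f v = w),
          ∃ (h : v ∉ U) (i : Fin (c w)),
            CapAux.pt hM (Sum.inl ⟨v, h⟩) =
              Sum.inr ⟨(⟨w, hwU⟩ : {u : V // u ∈ U}), i⟩ ∧ idx v = (i : ℕ) ∧
            Sum.inl ⟨v, h⟩ ∈ M.verts := by
        intro v hv
        simp only [mem_filter, mem_univ, true_and] at hv
        obtain ⟨hvS, hfveq⟩ := hv
        rw [hmemS, not_not] at hvS
        obtain ⟨h0, hm, hl⟩ := hvS
        have hfv : f v = CapAux.base (CapAux.pt hM (Sum.inl ⟨v, h0⟩)) := by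
          rw [hf]; exact dif_pos h0
        rcases hx : CapAux.pt hM (Sum.inl ⟨v, h0⟩) with w' | ⟨⟨u, hu⟩, i⟩
        · exfalso
          rw [hfv, hx] at hfveq
          have hww : w'.1 = w := hfveq
          exact w'.2 (hww ▸ hwU)
        · have huw : u = w := by rw [hfv, hx] at hfveq; exact hfveq
          subst huw
          refine ⟨h0, i, hx, ?_, hm⟩
          rw [hidx]
          simp only [dif_pos h0, hx, Sum.elim_inr]
      calc (univ.filter (fun v => v ∉ S ∧ f v = w)).card
          ≤ (Finset.range (c w)).card := by
            apply Finset.card_le_card_of_injOn idx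
            · intro v hv
              obtain ⟨h, i, -, hiv, -⟩ := hT v hv
              rw [Finset.mem_coe, Finset.mem_range, hiv]
              exact i.2
            · intro v₁ hv₁ v₂ hv₂ heq
              obtain ⟨h1, i1, hx1, hi1, hm1⟩ := hT v₁ hv₁
              obtain ⟨h2, i2, hx2, hi2, hm2⟩ := hT v₂ hv₂
              have : i1 = i2 := Fin.ext (by rw [← hi1, ← hi2, heq])
              subst this
              have hadj1 : M.Adj (Sum.inl ⟨v₁, h1⟩)
                  (Sum.inr ⟨(⟨w, hwU⟩ : {u : V // u ∈ U}), i1⟩) := by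
                have := CapAux.pt_adj hM hm1
                rwa [hx1] at this
              have hadj2 : M.Adj (Sum.inl ⟨v₂, h2⟩)
                  (Sum.inr ⟨(⟨w, hwU⟩ : {u : V // u ∈ U}), i1⟩) := by
                have := CapAux.pt_adj hM hm2
                rwa [hx2] at this
              have h12 := (CapAux.pt_eq hM hadj1.symm).symm.trans
                (CapAux.pt_eq hM hadj2.symm)
              exact congrArg (fun x => CapAux.base x) h12
        _ = c w := Finset.card_range _
    · rcases Finset.eq_empty_or_nonempty (univ.filter (fun v => v ∉ S ∧ f v = w)) with
        he | hne
      · rw [he]; simp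
      · have h1 := (hpre w hwU).1
        have h2 := (hpre w hwU).2 hne
        omega
  -- the cardinality count
  have hDnU : ∀ a ∈ univ.filter (fun v => CapAux.dead hM r v), a ∉ U := by
    intro a ha
    exact ((mem_filter.mp ha).2).choose
  have hcount : (univ.filter (fun v => CapAux.dead hM r v)).card = M.edgeSet.ncard := by
    rw [Set.ncard_eq_toFinset_card']
    apply Finset.card_bij
      (fun a ha => Sym2.mk (α := AuxVert U c) (Sum.inl (⟨a, hDnU a ha⟩ : {x : V // x ∉ U}))
        (CapAux.pt hM (Sum.inl ⟨a, hDnU a ha⟩)))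
    · intro a ha
      obtain ⟨h, hm, -⟩ := (mem_filter.mp ha).2
      rw [Set.mem_toFinset]; refine SimpleGraph.Subgraph.mem_edgeSet.mpr ?_
      exact CapAux.pt_adj hM hm
    · intro a₁ ha₁ a₂ ha₂ heq
      by_cases hEq : a₁ = a₂
      · exact hEq
      exfalso
      replace heq := Sym2.eq_iff.mp heq
      rcases heq with ⟨h1, -⟩ | ⟨h1, h2⟩
      · exact hEq (congrArg (fun x => CapAux.base x) h1)
      · -- a₁'s partner is a₂ and vice versa; both lose: contradiction
        obtain ⟨hb1, hm1, hl1⟩ := (mem_filter.mp ha₁).2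
        obtain ⟨hb2, hm2, hl2⟩ := (mem_filter.mp ha₂).2
        have hL1 : CapAux.loses c r a₁ a₂ := hl1 ⟨a₂, hDnU a₂ ha₂⟩ h2
        have hL2 : CapAux.loses c r a₂ a₁ := hl2 ⟨a₁, hDnU a₁ ha₁⟩ h1.symm
        have hadj : M.Adj (Sum.inl (⟨a₁, hDnU a₁ ha₁⟩ : {x : V // x ∉ U}))
            (Sum.inl (⟨a₂, hDnU a₂ ha₂⟩ : {x : V // x ∉ U})) := by
          have := CapAux.pt_adj hM hm1
          rwa [h2] at this
        have haux : G.Adj a₁ a₂ ∧ 0 < c a₁ + c a₂ := M.adj_sub hadj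
        have hne : r a₁ ≠ r a₂ := fun hrr => hEq (hrinj hrr)
        exact ((CapAux.loses_iff hne haux.2).mp hL1) hL2
    · intro b hb
      rw [Set.mem_toFinset] at hb
      induction b using Sym2.ind with
      | _ x y =>
        rw [SimpleGraph.Subgraph.mem_edgeSet] at hb
        rcases x with v | ⟨u, i⟩ <;> rcases y with w | ⟨u', j⟩
        · -- inl-inl edge
          have haux : G.Adj v.1 w.1 ∧ 0 < c v.1 + c w.1 := M.adj_sub hb
          have hvw : v.1 ≠ w.1 := G.ne_of_adj haux.1
          have hne : r v.1 ≠ r w.1 := fun hrr => hvw (hrinj hrr)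
          by_cases hL : CapAux.loses c r v.1 w.1
          · have hd : CapAux.dead hM r v.1 := by
              refine ⟨v.2, M.edge_vert hb, ?_⟩
              intro w' hw'
              rw [CapAux.pt_eq hM hb] at hw'
              rw [← Sum.inl.inj hw']
              exact hL
            refine ⟨v.1, mem_filter.mpr ⟨mem_univ _, hd⟩, ?_⟩
            rw [CapAux.pt_eq hM hb]
          · have hL' : CapAux.loses c r w.1 v.1 := by
              rw [CapAux.loses_iff hne.symm (by omega)]
              exact hL
            have hd : CapAux.dead hM r w.1 := by
              refine ⟨w.2, M.edge_vert hb.symm, ?_⟩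
              intro w' hw'
              rw [CapAux.pt_eq hM hb.symm] at hw'
              rw [← Sum.inl.inj hw']
              exact hL'
            refine ⟨w.1, mem_filter.mpr ⟨mem_univ _, hd⟩, ?_⟩
            rw [CapAux.pt_eq hM hb.symm]; exact Sym2.eq_swap
        · -- inl-inr edge
          have hd : CapAux.dead hM r v.1 := by
            refine ⟨v.2, M.edge_vert hb, ?_⟩
            intro w' hw'
            rw [CapAux.pt_eq hM hb] at hw'
            exact absurd hw' (by simp)
          refine ⟨v.1, mem_filter.mpr ⟨mem_univ _, hd⟩, ?_⟩
          rw [CapAux.pt_eq hM hb]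
        · -- inr-inl edge
          have hd : CapAux.dead hM r w.1 := by
            refine ⟨w.2, M.edge_vert hb.symm, ?_⟩
            intro w' hw'
            rw [CapAux.pt_eq hM hb.symm] at hw'
            exact absurd hw' (by simp)
          refine ⟨w.1, mem_filter.mpr ⟨mem_univ _, hd⟩, ?_⟩
          rw [CapAux.pt_eq hM hb.symm]; exact Sym2.eq_swap
        · exact absurd (M.adj_sub hb) (by simp [auxGraph])
  refine ⟨S, f, hUS, hdom, hcap, fun w hw => (hpre w hw).1, ?_⟩
  have hsplit := Finset.card_filter_add_card_filter_not
    (s := univ) (p := fun v => CapAux.dead hM r v)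
  rw [Finset.card_univ] at hsplit
  rw [← hsplit, hcount, hS]
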